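/- Let r ≥ 1, R ⊆ {1,…,n−1}, and σ ∈ S_n. Then, as formal power series in q_1,…,q_r: (q_r;q_r)_n · Σ_{Z ∈ (ℕ^r)^n with σ_R(Z) = σ} q^Z = Σ_{S ∈ (ℕ^{r−1})^n} q_r^{Comaj_{R,S}(σ)} q^S = Σ_{S ∈ (ℕ^{r−1})^n} q^{Z_{R,σ}(S)}. -/

import Mathlib

open scoped Classical

namespace RomeroComaj

noncomputable section

/-- `Seq r` is `ℕ^r`, the type of sequences of natural numbers of length `r`. -/
abbrev Seq (r : ℕ) := Fin r → ℕ

/-- strict lexicographic order on `ℕ^r`. -/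
def lexLt {r : ℕ} (a b : Seq r) : Prop :=
  ∃ i : Fin r, (∀ j : Fin r, j < i → a j = b j) ∧ a i < b i

/-- weak lexicographic order on `ℕ^r`. -/
def lexLe {r : ℕ} (a b : Seq r) : Prop :=
  lexLt a b ∨ a = b

/-- `RNbr R a b` : the (1-indexed) indices `a` and `b` are `R`-neighbors,
i.e. (for `a < b`) all of `a, a+1, …, b-1` lie in `R`. -/
def RNbr (R : Finset ℕ) (a b : ℕ) : Prop :=
  ∀ t ∈ Finset.Ico (min a b) (max a b), t ∈ R

/-- the value `σ_i` of the one-line notation of `σ`, both position `i` and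
the value being 1-indexed (junk value `0` outside `1 ≤ i ≤ n`). -/
def pget {n : ℕ} (σ : Equiv.Perm (Fin n)) (i : ℕ) : ℕ :=
  if h : i - 1 < n then (σ ⟨i - 1, h⟩).val + 1 else 0

/-- the sequence `s^i` of a list `S = (s^1, …, s^n)`, `i` being 1-indexed. -/
def sget {n r : ℕ} (S : Fin n → Seq r) (i : ℕ) : Seq r :=
  if h : i - 1 < n then S ⟨i - 1, h⟩ else 0

/-- the condition for `i` to belong to `Des_{R,S}(σ)`:
`s^{σ_i} > s^{σ_{i+1}} − χ(σ_{i+1} < σ_i ∧ σ_{i+1} ≁_R σ_i) − χ(σ_{i+1} > σ_i ∧ σ_i ∼_R σ_{i+1})`. -/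
def desCond {n r : ℕ} (R : Finset ℕ) (S : Fin n → Seq r) (σ : Equiv.Perm (Fin n)) (i : ℕ) :
    Prop :=
  if (pget σ (i+1) < pget σ i ∧ ¬ RNbr R (pget σ (i+1)) (pget σ i)) ∨
      (pget σ i < pget σ (i+1) ∧ RNbr R (pget σ i) (pget σ (i+1)))
  then lexLe (sget S (pget σ (i+1))) (sget S (pget σ i))
  else lexLt (sget S (pget σ (i+1))) (sget S (pget σ i))

/-- `Des_{R,S}(σ) ⊆ {1, …, n−1}` (1-indexed positions). -/
def DesSet {n r : ℕ} (R : Finset ℕ) (S : Fin n → Seq r) (σ : Equiv.Perm (Fin n)) : Finset ℕ :=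
  (Finset.Icc 1 (n-1)).filter (fun i => desCond R S σ i)

/-- `Comaj_{R,S}(σ) = ∑_{i ∈ Des_{R,S}(σ)} (n − i)`. -/
def Comaj {n r : ℕ} (R : Finset ℕ) (S : Fin n → Seq r) (σ : Equiv.Perm (Fin n)) : ℕ :=
  ∑ i ∈ DesSet R S σ, (n - i)

/-- `s^i` is read before `s^j` in the reading order of `S` (with respect to `R`);
`i, j` are 1-indexed. -/
def readBefore {n r : ℕ} (R : Finset ℕ) (S : Fin n → Seq r) (i j : ℕ) : Prop :=
  lexLt (sget S i) (sget S j) ∨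
    (sget S i = sget S j ∧ ((i < j ∧ ¬ RNbr R i j) ∨ (j < i ∧ RNbr R j i)))

/-- `IsReading R S σ` says that the reading permutation `σ_R(S)` equals `σ`,
i.e. `σ` lists `1, …, n` in the reading order of `S`. -/
def IsReading {n r : ℕ} (R : Finset ℕ) (S : Fin n → Seq r) (σ : Equiv.Perm (Fin n)) : Prop :=
  ∀ i ∈ Finset.Icc 1 (n-1), readBefore R S (pget σ i) (pget σ (i+1))

/-- the operator `Z_{R,σ} : (ℕ^r)^n → (ℕ^{r+1})^n`, prepending to `s^v` the number of
descents of `σ` (w.r.t. `R, S`) at positions strictly before the position of `v` in `σ`. -/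
def Zop {n r : ℕ} (R : Finset ℕ) (σ : Equiv.Perm (Fin n)) (S : Fin n → Seq r) :
    Fin n → Seq (r+1) :=
  fun v => Fin.cons ((DesSet R S σ ∩ Finset.Ico 1 ((σ.symm v).val + 1)).card) (S v)

/-- `Zvec R σs i = Z_{R,σ^i} ⋯ Z_{R,σ^1}(∅)` where `σ^{j+1} = σs j`. -/
def Zvec {n : ℕ} (R : Finset ℕ) (σs : ℕ → Equiv.Perm (Fin n)) : (i : ℕ) → Fin n → Seq i
  | 0 => fun _ => (0 : Seq 0)
  | (i+1) => Zop R (σs i) (Zvec R σs i)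

/-- extend a finite vector of permutations to `ℕ`, by the identity. -/
def extFun {n r : ℕ} (σv : Fin r → Equiv.Perm (Fin n)) : ℕ → Equiv.Perm (Fin n) :=
  fun j => if h : j < r then σv ⟨j, h⟩ else 1

/-- `comajI R k σv i = comaj^i_R(σ⃗)` for `1 ≤ i ≤ k`, where `σ⃗ = σv` has length `k−1`
and `σ^k = ε`. -/
def comajI {n : ℕ} (R : Finset ℕ) (k : ℕ) (σv : Fin (k-1) → Equiv.Perm (Fin n)) (i : ℕ) : ℕ :=
  Comaj R (Zvec R (extFun σv) (i-1)) (extFun σv (i-1))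

/-- the exponent of the monomial `q^S` for `S ∈ (ℕ^r)^n` : the (0-indexed) variable `i`
(that is, `q_{i+1}`) records the `(r−i)`-th (0-indexed: `r−1−i`-th) coordinates. -/
def expOf {n r : ℕ} (S : Fin n → Seq r) : Fin r →₀ ℕ :=
  Finsupp.equivFunOnFinite.symm (fun i => ∑ j : Fin n, S j (Fin.rev i))

/-- the formal power series whose coefficient at a monomial `d` counts the elements
`a : α` satisfying `P a d`. -/
def countSeriesP {σty α : Type*} (P : α → (σty →₀ ℕ) → Prop) : MvPowerSeries σty ℤ :=
  fun d => (Nat.card {a : α // P a d} : ℤ)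

/-- `∑_{S ∈ (ℕ^r)^n, P S} q^S`. -/
def countSeries {n r : ℕ} (P : (Fin n → Seq r) → Prop) : MvPowerSeries (Fin r) ℤ :=
  countSeriesP (fun S d => P S ∧ expOf S = d)

/-- the Pochhammer factor `(q_i; q_i)_n = ∏_{j=1}^n (1 − q_i^j)`. -/
def pochOne {r : ℕ} (n : ℕ) (i : Fin r) : MvPowerSeries (Fin r) ℤ :=
  ∏ j ∈ Finset.Icc 1 n, (1 - (MvPowerSeries.X i : MvPowerSeries (Fin r) ℤ) ^ j)

/-- `∏_{i=1}^{r} (q_i; q_i)_n`. -/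
def pochAll (n r : ℕ) : MvPowerSeries (Fin r) ℤ :=
  ∏ i : Fin r, pochOne n i

/-- the exponent of `q_1^{comaj¹_R(σ⃗)} ⋯ q_k^{comaj^k_R(σ⃗)}`. -/
def comajExp {n : ℕ} (R : Finset ℕ) (k : ℕ) (σv : Fin (k-1) → Equiv.Perm (Fin n)) :
    Fin k →₀ ℕ :=
  Finsupp.equivFunOnFinite.symm (fun i => comajI R k σv (i.val + 1))

/-- A standard Young tableau of shape `μ` (with `μ.card` cells), recorded by the
position `pos i` of each (1-indexed) entry `i ∈ {1, …, μ.card}`; entries increase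
left-to-right along rows and down columns (matrix convention), and `pos` is a
bijection from `{1, …, μ.card}` onto the cells of `μ` (normalized by `0` outside). -/
structure SYT (μ : YoungDiagram) where
  pos : ℕ → ℕ × ℕ
  mem : ∀ i ∈ Finset.Icc 1 μ.card, pos i ∈ μ
  inj : ∀ i ∈ Finset.Icc 1 μ.card, ∀ j ∈ Finset.Icc 1 μ.card, pos i = pos j → i = j
  surj : ∀ c ∈ μ, ∃ i ∈ Finset.Icc 1 μ.card, pos i = c
  row_inc : ∀ i ∈ Finset.Icc 1 μ.card, ∀ j ∈ Finset.Icc 1 μ.card,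
    (pos i).1 = (pos j).1 → (pos i).2 < (pos j).2 → i < j
  col_inc : ∀ i ∈ Finset.Icc 1 μ.card, ∀ j ∈ Finset.Icc 1 μ.card,
    (pos i).2 = (pos j).2 → (pos i).1 < (pos j).1 → i < j
  junk : ∀ i, i ∉ Finset.Icc 1 μ.card → pos i = 0

/-- `des(T)` : the set of `i ∈ {1, …, n−1}` such that `i+1` lies in a strictly
higher row of `T` than `i` (in matrix convention: a strictly larger row index). -/
def desSYT {μ : YoungDiagram} (T : SYT μ) : Finset ℕ :=
  (Finset.Icc 1 (μ.card - 1)).filter (fun i => (T.pos i).1 < (T.pos (i+1)).1)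

/-- the ordinary descent set `des(π) = {i : π_i > π_{i+1}}` (1-indexed). -/
def desPerm {n : ℕ} (π : Equiv.Perm (Fin n)) : Finset ℕ :=
  (Finset.Icc 1 (n-1)).filter (fun i => pget π (i+1) < pget π i)

/-- `comaj(π) = ∑_{i ∈ des(π)} (n − i)`. -/
def comajP {n : ℕ} (π : Equiv.Perm (Fin n)) : ℕ :=
  ∑ i ∈ desPerm π, (n - i)


/-- `Z^{(2)}` : delete the first coordinate of each sequence. -/
def tailS {n r : ℕ} (S : Fin n → Seq (r+1)) : Fin n → Seq r :=
  fun v i => S v i.succ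

/-- the exponent of the monomial `q^S` for `S ∈ (ℕ^r)^n`, viewed in the `r+1` variables
`q_1, …, q_{r+1}` (a monomial in `q_1, …, q_r` only). -/
def expTail {n r : ℕ} (S : Fin n → Seq r) : Fin (r+1) →₀ ℕ :=
  Finsupp.equivFunOnFinite.symm (fun i =>
    if h : i.val < r then ∑ j : Fin n, S j (Fin.rev ⟨i.val, h⟩) else 0)

section Aux

lemma lexLt_irrefl {r : ℕ} (a : Seq r) : ¬ lexLt a a := by
  rintro ⟨i, -, hi⟩; exact lt_irrefl _ hi

lemma lexLt_asymm {r : ℕ} {a b : Seq r} (h1 : lexLt a b) (h2 : lexLt b a) : False := by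
  obtain ⟨i, hji, hi⟩ := h1
  obtain ⟨i', hji', hi'⟩ := h2
  rcases lt_trichotomy i i' with h | h | h
  · have := hji' i h; omega
  · subst h; omega
  · have := hji i' h; omega

lemma lexLt_total {r : ℕ} {a b : Seq r} (h : a ≠ b) : lexLt a b ∨ lexLt b a := by
  have hne : (Finset.univ.filter (fun i => a i ≠ b i)).Nonempty := by
    by_contra hc
    rw [Finset.not_nonempty_iff_eq_empty, Finset.filter_eq_empty_iff] at hc
    exact h (funext fun i => by have := hc (Finset.mem_univ i); simpa using this)
  set i := Finset.min' _ hne with hidef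
  have hi : a i ≠ b i := by
    have := Finset.min'_mem _ hne; simpa using this
  have hj : ∀ j, j < i → a j = b j := fun j hji => by
    by_contra hc
    exact absurd (Finset.min'_le _ j (by simpa using hc)) (not_le.2 hji)
  rcases lt_or_gt_of_ne hi with h' | h'
  · exact Or.inl ⟨i, hj, h'⟩
  · exact Or.inr ⟨i, fun j hji => (hj j hji).symm, h'⟩

lemma not_lexLt_iff {r : ℕ} {a b : Seq r} : ¬ lexLt a b ↔ lexLe b a := by
  constructor
  · intro h
    by_cases he : a = b
    · exact Or.inr he.symm
    · rcases lexLt_total he with h' | h'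
      · exact absurd h' h
      · exact Or.inl h'
  · rintro (h | h) h'
    · exact lexLt_asymm h h'
    · subst h; exact lexLt_irrefl _ h'

lemma lexLt_succ_iff {r : ℕ} {a b : Seq (r+1)} :
    lexLt a b ↔ a 0 < b 0 ∨ (a 0 = b 0 ∧
      lexLt (fun i : Fin r => a i.succ) (fun i : Fin r => b i.succ)) := by
  constructor
  · rintro ⟨i, hj, hi⟩
    rcases Fin.eq_zero_or_eq_succ i with rfl | ⟨i', rfl⟩
    · exact Or.inl hi
    · refine Or.inr ⟨hj 0 (Fin.succ_pos i'), ⟨i', fun j hji => hj j.succ ?_, hi⟩⟩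
      exact Fin.succ_lt_succ_iff.2 hji
  · rintro (h | ⟨h0, i', hj', hi'⟩)
    · exact ⟨0, fun j hj => absurd hj (Fin.not_lt_zero j), h⟩
    · refine ⟨i'.succ, fun j hj => ?_, hi'⟩
      rcases Fin.eq_zero_or_eq_succ j with rfl | ⟨j', rfl⟩
      · exact h0
      · exact hj' j' (Fin.succ_lt_succ_iff.1 hj)

lemma seq_eq_succ_iff {r : ℕ} {a b : Seq (r+1)} :
    a = b ↔ a 0 = b 0 ∧ (fun i : Fin r => a i.succ) = (fun i : Fin r => b i.succ) := by
  constructor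
  · rintro rfl; exact ⟨rfl, rfl⟩
  · rintro ⟨h0, hs⟩
    funext j
    rcases Fin.eq_zero_or_eq_succ j with rfl | ⟨j', rfl⟩
    · exact h0
    · exact congrFun hs j'

lemma RNbr_symm {R : Finset ℕ} {a b : ℕ} : RNbr R a b ↔ RNbr R b a := by
  unfold RNbr; rw [min_comm, max_comm]

end Aux

/-- counting series attached to a weight function. -/
def WS {α : Type*} {q : ℕ} (w : α → (Fin q →₀ ℕ)) : MvPowerSeries (Fin q) ℤ :=
  fun d => (Nat.card {a : α // w a = d} : ℤ)

lemma countSeriesP_eq_WS {α : Type*} {q : ℕ} (w : α → Fin q →₀ ℕ) :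
    countSeriesP (fun a d => w a = d) = WS w := rfl

lemma WS_congr {α β : Type*} {q : ℕ} (w₁ : α → Fin q →₀ ℕ) (w₂ : β → Fin q →₀ ℕ)
    (e : α ≃ β) (hw : ∀ a, w₂ (e a) = w₁ a) : WS w₁ = WS w₂ := by
  funext d
  exact congrArg _ (Nat.card_congr (e.subtypeEquiv fun a => by rw [hw a]))

lemma sum_nat_card {M : Type*} (t : Finset M) (f : M → Type*) [∀ m, Finite (f m)] :
    ∑ m ∈ t, Nat.card (f m) = Nat.card (Σ m : t, f (m : M)) := by
  classical
  haveI : ∀ m : M, Fintype (f m) := fun m => Fintype.ofFinite _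
  rw [Nat.card_eq_fintype_card, Fintype.card_sigma]
  simp only [Nat.card_eq_fintype_card]
  exact (Finset.sum_coe_sort t (fun m => Fintype.card (f m))).symm

def pairFiberEquiv {α β : Type*} {q : ℕ} (w₁ : α → Fin q →₀ ℕ) (w₂ : β → Fin q →₀ ℕ)
    (e f : Fin q →₀ ℕ) :
    {ab : α × β // w₁ ab.1 = e ∧ w₂ ab.2 = f} ≃ {a // w₁ a = e} × {b // w₂ b = f} where
  toFun x := (⟨x.1.1, x.2.1⟩, ⟨x.1.2, x.2.2⟩)
  invFun y := ⟨(y.1.1, y.2.1), y.1.2, y.2.2⟩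
  left_inv := by rintro ⟨⟨a, b⟩, h⟩; rfl
  right_inv := by rintro ⟨⟨a, h1⟩, ⟨b, h2⟩⟩; rfl

def sigmaFiberEquiv {α β : Type*} {q : ℕ} (w₁ : α → Fin q →₀ ℕ) (w₂ : β → Fin q →₀ ℕ)
    (d : Fin q →₀ ℕ) :
    (Σ p : (Finset.HasAntidiagonal.antidiagonal d : Finset ((Fin q →₀ ℕ) × (Fin q →₀ ℕ))),
        {ab : α × β // w₁ ab.1 = (p : (Fin q →₀ ℕ) × (Fin q →₀ ℕ)).1 ∧
          w₂ ab.2 = (p : (Fin q →₀ ℕ) × (Fin q →₀ ℕ)).2}) ≃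
      {ab : α × β // w₁ ab.1 + w₂ ab.2 = d} where
  toFun x := ⟨x.2.1, by rw [x.2.2.1, x.2.2.2]; exact Finset.HasAntidiagonal.mem_antidiagonal.1 x.1.2⟩
  invFun y := ⟨⟨(w₁ y.1.1, w₂ y.1.2), Finset.HasAntidiagonal.mem_antidiagonal.2 y.2⟩, ⟨y.1, rfl, rfl⟩⟩
  left_inv := by
    rintro ⟨⟨⟨e, f⟩, hp⟩, ⟨ab, h1, h2⟩⟩
    simp only at h1 h2
    subst h1; subst h2; rfl
  right_inv := by rintro ⟨ab, h⟩; rfl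

lemma WS_mul {α β : Type*} {q : ℕ} (w₁ : α → Fin q →₀ ℕ) (w₂ : β → Fin q →₀ ℕ)
    (h₁ : ∀ d, Finite {a : α // w₁ a = d}) (h₂ : ∀ d, Finite {b : β // w₂ b = d}) :
    WS w₁ * WS w₂ = WS (fun p : α × β => w₁ p.1 + w₂ p.2) := by
  funext d
  have hco : (WS w₁ * WS w₂) d = MvPowerSeries.coeff d (WS w₁ * WS w₂) := rfl
  rw [hco, MvPowerSeries.coeff_mul]
  haveI : ∀ (p : (Fin q →₀ ℕ) × (Fin q →₀ ℕ)),
      Finite {ab : α × β // w₁ ab.1 = p.1 ∧ w₂ ab.2 = p.2} := by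
    intro p
    haveI := h₁ p.1; haveI := h₂ p.2
    exact Finite.of_equiv _ (pairFiberEquiv w₁ w₂ p.1 p.2).symm
  have step1 : ∀ p ∈ Finset.HasAntidiagonal.antidiagonal d,
      MvPowerSeries.coeff p.1 (WS w₁) * MvPowerSeries.coeff p.2 (WS w₂) =
      (Nat.card {ab : α × β // w₁ ab.1 = p.1 ∧ w₂ ab.2 = p.2} : ℤ) := by
    intro p _
    have : MvPowerSeries.coeff p.1 (WS w₁) = (Nat.card {a : α // w₁ a = p.1} : ℤ) := rfl
    rw [this]
    have : MvPowerSeries.coeff p.2 (WS w₂) = (Nat.card {b : β // w₂ b = p.2} : ℤ) := rfl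
    rw [this, Nat.card_congr (pairFiberEquiv w₁ w₂ p.1 p.2), Nat.card_prod]
    push_cast
    ring
  rw [Finset.sum_congr rfl step1]
  have hW : WS (fun p : α × β => w₁ p.1 + w₂ p.2) d =
      (Nat.card {ab : α × β // w₁ ab.1 + w₂ ab.2 = d} : ℤ) := rfl
  have hs := sum_nat_card (Finset.HasAntidiagonal.antidiagonal d)
      (fun p : (Fin q →₀ ℕ) × (Fin q →₀ ℕ) => {ab : α × β // w₁ ab.1 = p.1 ∧ w₂ ab.2 = p.2})
  rw [hW, ← Nat.card_congr (sigmaFiberEquiv w₁ w₂ d), ← hs]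
  push_cast
  rfl

lemma WS_add {α β : Type*} {q : ℕ} (w₁ : α → Fin q →₀ ℕ) (w₂ : β → Fin q →₀ ℕ)
    (h₁ : ∀ d, Finite {a : α // w₁ a = d}) (h₂ : ∀ d, Finite {b : β // w₂ b = d}) :
    WS w₁ + WS w₂ = WS (Sum.elim w₁ w₂) := by
  funext d
  haveI := h₁ d; haveI := h₂ d
  have e : {x : α ⊕ β // Sum.elim w₁ w₂ x = d} ≃ {a // w₁ a = d} ⊕ {b // w₂ b = d} :=
    { toFun := fun x => match x with
        | ⟨Sum.inl a, h⟩ => Sum.inl ⟨a, h⟩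
        | ⟨Sum.inr b, h⟩ => Sum.inr ⟨b, h⟩
      invFun := fun x => match x with
        | Sum.inl a => ⟨Sum.inl a.1, a.2⟩
        | Sum.inr b => ⟨Sum.inr b.1, b.2⟩
      left_inv := by rintro ⟨x | x, h⟩ <;> rfl
      right_inv := by rintro (x | x) <;> rfl }
  have : (WS w₁ + WS w₂) d = WS w₁ d + WS w₂ d := rfl
  rw [this]
  have : WS (Sum.elim w₁ w₂) d = (Nat.card {x : α ⊕ β // Sum.elim w₁ w₂ x = d} : ℤ) := rfl
  rw [this, Nat.card_congr e, Nat.card_sum]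
  push_cast
  rfl

lemma WS_one {q : ℕ} : WS (fun _ : Unit => (0 : Fin q →₀ ℕ)) = 1 := by
  funext d
  have : (1 : MvPowerSeries (Fin q) ℤ) d = MvPowerSeries.coeff d 1 := rfl
  rw [this, MvPowerSeries.coeff_one]
  by_cases h : d = 0
  · subst h
    simp only [if_pos rfl]
    have : Nat.card {_u : Unit // (0 : Fin q →₀ ℕ) = 0} = 1 := by
      rw [Nat.card_eq_one_iff_unique]
      exact ⟨⟨fun a b => Subtype.ext rfl⟩, ⟨⟨Unit.unit, rfl⟩⟩⟩
    rw [show WS (fun _ : Unit => (0 : Fin q →₀ ℕ)) 0 = (Nat.card {_u : Unit // (0 : Fin q →₀ ℕ) = 0} : ℤ) from rfl, this]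
    rfl
  · rw [if_neg h]
    have : Nat.card {_u : Unit // (0 : Fin q →₀ ℕ) = d} = 0 := by
      rw [Nat.card_eq_zero]
      left
      rw [isEmpty_subtype]
      exact fun _ => fun hc => h hc.symm
    rw [show WS (fun _ : Unit => (0 : Fin q →₀ ℕ)) d = (Nat.card {_u : Unit // (0 : Fin q →₀ ℕ) = d} : ℤ) from rfl, this]
    rfl

lemma WS_X_pow {q : ℕ} (i : Fin q) (k : ℕ) :
    WS (fun _ : Unit => Finsupp.single i k) = (MvPowerSeries.X i : MvPowerSeries (Fin q) ℤ) ^ k := by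
  funext d
  have : ((MvPowerSeries.X i : MvPowerSeries (Fin q) ℤ) ^ k) d =
      MvPowerSeries.coeff d ((MvPowerSeries.X i) ^ k) := rfl
  rw [this, MvPowerSeries.coeff_X_pow]
  by_cases h : d = Finsupp.single i k
  · rw [if_pos h]
    have : Nat.card {_u : Unit // Finsupp.single i k = d} = 1 := by
      rw [Nat.card_eq_one_iff_unique]
      exact ⟨⟨fun a b => Subtype.ext rfl⟩, ⟨⟨Unit.unit, h.symm⟩⟩⟩
    rw [show WS (fun _ : Unit => Finsupp.single i k) d = (Nat.card {_u : Unit // Finsupp.single i k = d} : ℤ) from rfl, this]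
    exact Nat.cast_one
  · rw [if_neg h]
    have : Nat.card {_u : Unit // Finsupp.single i k = d} = 0 := by
      rw [Nat.card_eq_zero]
      left
      rw [isEmpty_subtype]
      exact fun _ => fun hc => h hc.symm
    rw [show WS (fun _ : Unit => Finsupp.single i k) d = (Nat.card {_u : Unit // Finsupp.single i k = d} : ℤ) from rfl, this]
    rfl

/-- partitions with at most `m` parts, as a power series in `q_{r+1}`. -/
def Ppart (r m : ℕ) : MvPowerSeries (Fin (r+1)) ℤ :=
  WS (fun h : {h : Fin m → ℕ // Monotone h} => Finsupp.single (Fin.last r) (∑ k, h.1 k))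

lemma finite_mono_fiber (r m c : ℕ) (d : Fin (r+1) →₀ ℕ) :
    Finite {h : {h : Fin m → ℕ // Monotone h} //
      Finsupp.single (Fin.last r) (c + ∑ k, h.1 k) = d} := by
  have hb : ∀ (x : {h : {h : Fin m → ℕ // Monotone h} //
      Finsupp.single (Fin.last r) (c + ∑ k, h.1 k) = d}) (k : Fin m),
      x.1.1 k < d (Fin.last r) + 1 := by
    intro x k
    have hx := congrArg (fun f : Fin (r+1) →₀ ℕ => f (Fin.last r)) x.2
    simp only [Finsupp.single_eq_same] at hx
    have : x.1.1 k ≤ ∑ j, x.1.1 j :=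
      Finset.single_le_sum (fun _ _ => Nat.zero_le _) (Finset.mem_univ k)
    omega
  apply Finite.of_injective (fun x => fun k => (⟨x.1.1 k, hb x k⟩ : Fin (d (Fin.last r) + 1)))
  intro x y hxy
  apply Subtype.ext; apply Subtype.ext; funext k
  exact congrArg Fin.val (congrFun hxy k)

lemma finite_Ppart_fiber (r m : ℕ) (d : Fin (r+1) →₀ ℕ) :
    Finite {h : {h : Fin m → ℕ // Monotone h} //
      Finsupp.single (Fin.last r) (∑ k, h.1 k) = d} := by
  have := finite_mono_fiber r m 0 d
  simp only [Nat.zero_add] at this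
  exact this

def partStepEquiv (m : ℕ) :
    (Unit × {h : Fin (m+1) → ℕ // Monotone h}) ⊕ {h : Fin m → ℕ // Monotone h} ≃
      {h : Fin (m+1) → ℕ // Monotone h} where
  toFun x := match x with
    | Sum.inl (_, h) => ⟨fun k => h.1 k + 1, fun a b hab =>
        Nat.add_le_add_right (h.2 hab) 1⟩
    | Sum.inr h => ⟨Fin.cons 0 h.1, by
        intro a b hab
        rcases Fin.eq_zero_or_eq_succ a with rfl | ⟨a', rfl⟩
        · rw [Fin.cons_zero]; exact Nat.zero_le _
        · rcases Fin.eq_zero_or_eq_succ b with rfl | ⟨b', rfl⟩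
          · exact absurd hab (by simp [Fin.le_def])
          · rw [Fin.cons_succ, Fin.cons_succ]
            exact h.2 (Fin.succ_le_succ_iff.1 hab)⟩
  invFun h :=
    if h0 : h.1 0 = 0 then
      Sum.inr ⟨fun k => h.1 k.succ, fun a b hab => h.2 (Fin.succ_le_succ_iff.2 hab)⟩
    else
      Sum.inl ((), ⟨fun k => h.1 k - 1, fun a b hab => Nat.sub_le_sub_right (h.2 hab) 1⟩)
  left_inv := by
    rintro (⟨⟨⟩, h⟩ | h)
    · have h0 : ¬ (h.1 0 + 1 = 0) := by omega
      simp only [dif_neg h0]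
      refine congrArg Sum.inl (Prod.ext rfl (Subtype.ext (funext fun k => ?_)))
      show h.1 k + 1 - 1 = h.1 k
      omega
    · have h0 : (Fin.cons 0 h.1 : Fin (m+1) → ℕ) 0 = 0 := Fin.cons_zero _ _
      simp only [dif_pos h0]
      refine congrArg Sum.inr (Subtype.ext (funext fun k => ?_))
      show (Fin.cons 0 h.1 : Fin (m+1) → ℕ) k.succ = h.1 k
      rw [Fin.cons_succ]
  right_inv := by
    intro h
    by_cases h0 : h.1 0 = 0
    · simp only [dif_pos h0]
      apply Subtype.ext; funext k
      rcases Fin.eq_zero_or_eq_succ k with rfl | ⟨k', rfl⟩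
      · show (Fin.cons 0 (fun k : Fin m => h.1 k.succ) : Fin (m+1) → ℕ) 0 = h.1 0
        rw [Fin.cons_zero]; exact h0.symm
      · show (Fin.cons 0 (fun k : Fin m => h.1 k.succ) : Fin (m+1) → ℕ) k'.succ = h.1 k'.succ
        rw [Fin.cons_succ]
    · simp only [dif_neg h0]
      apply Subtype.ext; funext k
      have : 1 ≤ h.1 0 := by omega
      have h1 : 1 ≤ h.1 k := le_trans this (h.2 (Fin.zero_le k))
      show h.1 k - 1 + 1 = h.1 k
      omega

lemma Ppart_step (r m : ℕ) :
    Ppart r (m+1) =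
      (MvPowerSeries.X (Fin.last r) : MvPowerSeries (Fin (r+1)) ℤ) ^ (m+1) * Ppart r (m+1)
        + Ppart r m := by
  rw [← WS_X_pow (q := r+1) (Fin.last r) (m+1)]
  unfold Ppart
  have hfin1 : ∀ d : Fin (r+1) →₀ ℕ,
      Finite {u : Unit // Finsupp.single (Fin.last r) (m+1) = d} := fun d => inferInstance
  rw [WS_mul _ _ hfin1 (finite_Ppart_fiber r (m+1))]
  have hpair : ∀ d : Fin (r+1) →₀ ℕ,
      Finite {p : Unit × {h : Fin (m+1) → ℕ // Monotone h} //
        Finsupp.single (Fin.last r) (m+1) + Finsupp.single (Fin.last r) (∑ k, p.2.1 k) = d} := by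
    intro d
    have e : {p : Unit × {h : Fin (m+1) → ℕ // Monotone h} //
        Finsupp.single (Fin.last r) (m+1) + Finsupp.single (Fin.last r) (∑ k, p.2.1 k) = d} ≃
        {h : {h : Fin (m+1) → ℕ // Monotone h} //
          Finsupp.single (Fin.last r) ((m+1) + ∑ k, h.1 k) = d} :=
      { toFun := fun x => ⟨x.1.2, by
          have hx := x.2; rw [Finsupp.single_add]; exact hx⟩
        invFun := fun x => ⟨((), x.1), by
          have hx := x.2; rw [Finsupp.single_add] at hx; exact hx⟩
        left_inv := by rintro ⟨⟨u, h⟩, hp⟩; rfl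
        right_inv := by rintro ⟨h, hp⟩; rfl }
    haveI := finite_mono_fiber r (m+1) (m+1) d
    exact Finite.of_equiv _ e.symm
  rw [WS_add _ _ hpair (finite_Ppart_fiber r m)]
  refine (WS_congr _ _ (partStepEquiv m) ?_).symm
  rintro (⟨u, h⟩ | h)
  · show Finsupp.single (Fin.last r) (∑ k : Fin (m+1), (h.1 k + 1)) =
      Finsupp.single (Fin.last r) (m+1) + Finsupp.single (Fin.last r) (∑ k, h.1 k)
    rw [show (∑ k : Fin (m+1), (h.1 k + 1)) = (m+1) + ∑ k, h.1 k by
      rw [Finset.sum_add_distrib]; simp [add_comm], Finsupp.single_add]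
  · show Finsupp.single (Fin.last r) (∑ k : Fin (m+1), (Fin.cons 0 h.1 : Fin (m+1) → ℕ) k) =
      Finsupp.single (Fin.last r) (∑ k, h.1 k)
    congr 1
    rw [Fin.sum_univ_succ]
    simp

lemma poch_P (r : ℕ) : ∀ m, pochOne (r := r+1) m (Fin.last r) * Ppart r m = 1
  | 0 => by
    have h1 : pochOne (r := r+1) 0 (Fin.last r) = 1 := by
      unfold pochOne
      rw [show Finset.Icc 1 0 = (∅ : Finset ℕ) from Finset.Icc_eq_empty (by omega)]
      exact Finset.prod_empty
    have e : {h : Fin 0 → ℕ // Monotone h} ≃ Unit :=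
      { toFun := fun _ => ()
        invFun := fun _ => ⟨fun k => k.elim0, fun a => a.elim0⟩
        left_inv := fun x => Subtype.ext (funext fun k => k.elim0)
        right_inv := fun _ => rfl }
    have h2 : Ppart r 0 = 1 := by
      unfold Ppart
      rw [WS_congr _ (fun _ : Unit => (0 : Fin (r+1) →₀ ℕ)) e (fun a => by simp)]
      exact WS_one
    rw [h1, h2, mul_one]
  | (m+1) => by
    have hrec : pochOne (r := r+1) (m+1) (Fin.last r) =
        pochOne (r := r+1) m (Fin.last r) *
          (1 - MvPowerSeries.X (Fin.last r) ^ (m+1)) := by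
      unfold pochOne
      rw [show Finset.Icc 1 (m+1) = insert (m+1) (Finset.Icc 1 m) from
        (Finset.insert_Icc_right_eq_Icc_add_one (by omega)).symm,
        Finset.prod_insert (by simp)]
      ring
    have hstep : (1 - MvPowerSeries.X (Fin.last r) ^ (m+1)) * Ppart r (m+1) = Ppart r m := by
      have hS := Ppart_step r m
      calc (1 - MvPowerSeries.X (Fin.last r) ^ (m+1)) * Ppart r (m+1)
          = Ppart r (m+1) - MvPowerSeries.X (Fin.last r) ^ (m+1) * Ppart r (m+1) := by ring
        _ = (MvPowerSeries.X (Fin.last r) ^ (m+1) * Ppart r (m+1) + Ppart r m)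
              - MvPowerSeries.X (Fin.last r) ^ (m+1) * Ppart r (m+1) := by rw [← hS]
        _ = Ppart r m := by ring
    rw [hrec, mul_assoc, hstep]
    exact poch_P r m

section Core
variable {n r : ℕ}

lemma sget_pget {r : ℕ} (Z : Fin n → Seq r) (σ : Equiv.Perm (Fin n)) (j : ℕ) (hj : j - 1 < n) :
    sget Z (pget σ j) = Z (σ ⟨j-1, hj⟩) := by
  rw [pget, dif_pos hj, sget,
    dif_pos (show (σ ⟨j-1, hj⟩).val + 1 - 1 < n by simpa using (σ ⟨j-1, hj⟩).isLt)]
  congr 1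

lemma mem_DesSet {r : ℕ} (R : Finset ℕ) (S : Fin n → Seq r) (σ : Equiv.Perm (Fin n)) (j : ℕ) :
    j ∈ DesSet R S σ ↔ (1 ≤ j ∧ j ≤ n-1) ∧ desCond R S σ j := by
  simp [DesSet, Finset.mem_filter, Finset.mem_Icc]

/-- number of descents at positions `≤ k`. -/
def mcnt (R : Finset ℕ) (σ : Equiv.Perm (Fin n)) {r : ℕ} (S : Fin n → Seq r) (k : ℕ) : ℕ :=
  (DesSet R S σ ∩ Finset.Ico 1 (k+1)).card

lemma mcnt_zero (R : Finset ℕ) (σ : Equiv.Perm (Fin n)) {r : ℕ} (S : Fin n → Seq r) :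
    mcnt R σ S 0 = 0 := by simp [mcnt]

lemma mcnt_succ (R : Finset ℕ) (σ : Equiv.Perm (Fin n)) {r : ℕ} (S : Fin n → Seq r) (k : ℕ) :
    mcnt R σ S (k+1) = mcnt R σ S k + (if (k+1) ∈ DesSet R S σ then 1 else 0) := by
  unfold mcnt
  rw [show Finset.Ico 1 (k+1+1) = insert (k+1) (Finset.Ico 1 (k+1)) from
    Nat.Ico_succ_right_eq_insert_Ico (show 1 ≤ k+1 by omega)]
  by_cases hd : (k+1) ∈ DesSet R S σ
  · rw [if_pos hd, Finset.inter_comm, Finset.insert_inter_of_mem hd,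
      Finset.card_insert_of_notMem
        (fun hc => by have := (Finset.mem_inter.1 hc).1
                      rw [Finset.mem_Ico] at this; omega),
      Finset.inter_comm]
  · rw [if_neg hd, Finset.inter_comm, Finset.insert_inter_of_notMem hd, Finset.inter_comm,
      add_zero]

lemma sum_mcnt (R : Finset ℕ) (σ : Equiv.Perm (Fin n)) {r : ℕ} (S : Fin n → Seq r) :
    ∑ k : Fin n, mcnt R σ S k.val = Comaj R S σ := by
  have h1 : ∀ k : Fin n, mcnt R σ S k.val = ∑ j ∈ DesSet R S σ, if j ≤ k.val then 1 else 0 := by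
    intro k
    unfold mcnt
    rw [show DesSet R S σ ∩ Finset.Ico 1 (k.val+1) =
        (DesSet R S σ).filter (fun j => j ≤ k.val) from ?_]
    · rw [Finset.card_filter]
    · ext j
      rw [Finset.mem_inter, Finset.mem_filter, Finset.mem_Ico]
      constructor
      · rintro ⟨hj, h1, h2⟩; exact ⟨hj, by omega⟩
      · rintro ⟨hj, h2⟩
        have h1 : 1 ≤ j := ((mem_DesSet R S σ j).1 hj).1.1
        exact ⟨hj, h1, by omega⟩
  rw [Finset.sum_congr rfl (fun k _ => h1 k), Finset.sum_comm]
  unfold Comaj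
  refine Finset.sum_congr rfl (fun j hj => ?_)
  rw [Fin.sum_univ_eq_sum_range (fun t => if j ≤ t then 1 else 0) n, ← Finset.card_filter,
    show ((Finset.range n).filter (fun t => j ≤ t)) = Finset.Ico j n from by
      ext t; simp [Finset.mem_filter, Finset.mem_range, Finset.mem_Ico, and_comm],
    Nat.card_Ico]

lemma readBefore_iff (R : Finset ℕ) (σ : Equiv.Perm (Fin n)) (Z : Fin n → Seq (r+1))
    (j : ℕ) (h1 : 1 ≤ j) (h2 : j < n) (hj1 : j - 1 < n) :
    readBefore R Z (pget σ j) (pget σ (j+1)) ↔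
      Z (σ ⟨j-1, hj1⟩) 0 + (if desCond R (tailS Z) σ j then 1 else 0) ≤ Z (σ ⟨j, h2⟩) 0 := by
  have hj3 : (j+1) - 1 < n := by omega
  set u := σ ⟨j-1, hj1⟩ with hu
  set v := σ ⟨j, h2⟩ with hv
  set Su := tailS Z u with hSu
  set Sv := tailS Z v with hSv
  have hsu : sget Z (pget σ j) = Z u := sget_pget Z σ j hj1
  have hsv : sget Z (pget σ (j+1)) = Z v := sget_pget Z σ (j+1) hj3
  have hstu : sget (tailS Z) (pget σ j) = Su := sget_pget (tailS Z) σ j hj1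
  have hstv : sget (tailS Z) (pget σ (j+1)) = Sv := sget_pget (tailS Z) σ (j+1) hj3
  set a := pget σ j with ha
  set b := pget σ (j+1) with hb
  have hav : a = u.val + 1 := by rw [ha, pget, dif_pos hj1]
  have hbv : b = v.val + 1 := by
    rw [hb, pget, dif_pos hj3]
    rfl
  have huv : u ≠ v := by
    intro hc
    have hc2 := σ.injective hc
    have hc3 : j - 1 = j := congrArg Fin.val hc2
    omega
  have hab : a ≠ b := by
    rw [hav, hbv]
    intro hc
    exact huv (Fin.ext (by omega))
  -- T is the "reads-before" tie-break, B the descent tie-break; B ↔ ¬ T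
  have hBT : ((b < a ∧ ¬ RNbr R b a) ∨ (a < b ∧ RNbr R a b)) ↔
      ¬ ((a < b ∧ ¬ RNbr R a b) ∨ (b < a ∧ RNbr R b a)) := by
    have hs : RNbr R b a ↔ RNbr R a b := RNbr_symm
    rcases (show a < b ∨ b < a from by omega) with h | h
    · by_cases hrn : RNbr R a b
      · simp [h, show ¬ b < a by omega, hrn, hs.2 hrn]
      · simp [h, show ¬ b < a by omega, hrn, fun hc => hrn (hs.1 hc)]
    · by_cases hrn : RNbr R b a
      · simp [h, show ¬ a < b by omega, hrn, hs.1 hrn]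
      · simp [h, show ¬ a < b by omega, hrn, fun hc => hrn (hs.2 hc)]
  have hread : readBefore R Z a b ↔
      (lexLt (Z u) (Z v) ∨ (Z u = Z v ∧
        ((a < b ∧ ¬ RNbr R a b) ∨ (b < a ∧ RNbr R b a)))) := by
    unfold readBefore
    rw [hsu, hsv]
  have htail_u : (fun i : Fin r => Z u i.succ) = Su := rfl
  have htail_v : (fun i : Fin r => Z v i.succ) = Sv := rfl
  have hD : desCond R (tailS Z) σ j ↔ ¬ (lexLt Su Sv ∨ (Su = Sv ∧
      ((a < b ∧ ¬ RNbr R a b) ∨ (b < a ∧ RNbr R b a)))) := by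
    unfold desCond
    rw [hstu, hstv]
    by_cases hB : (b < a ∧ ¬ RNbr R b a) ∨ (a < b ∧ RNbr R a b)
    · rw [if_pos hB]
      have hT : ¬ ((a < b ∧ ¬ RNbr R a b) ∨ (b < a ∧ RNbr R b a)) := hBT.1 hB
      constructor
      · intro hle
        rintro (hl | ⟨he, ht⟩)
        · exact (not_lexLt_iff.2 hle) hl
        · exact hT ht
      · intro hnot
        exact not_lexLt_iff.1 (fun hl => hnot (Or.inl hl))
    · rw [if_neg hB]
      have hT : (a < b ∧ ¬ RNbr R a b) ∨ (b < a ∧ RNbr R b a) := by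
        by_contra hc; exact hB (hBT.2 hc)
      constructor
      · intro hl
        rintro (hl' | ⟨he, _⟩)
        · exact lexLt_asymm hl hl'
        · exact absurd hl (by rw [he]; exact lexLt_irrefl _)
      · intro hnot
        rcases not_lexLt_iff.1 (fun hl => hnot (Or.inl hl)) with hl | he
        · exact hl
        · exact absurd (Or.inr ⟨he.symm, hT⟩) hnot
  rw [hread]
  by_cases hd : desCond R (tailS Z) σ j
  · rw [if_pos hd]
    have hnr := hD.1 hd
    constructor
    · rintro (hlex | ⟨heq, hT⟩)
      · rcases lexLt_succ_iff.1 hlex with h | ⟨h0, hl⟩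
        · exact h
        · exact absurd (Or.inl hl) hnr
      · exact absurd (Or.inr ⟨(seq_eq_succ_iff.1 heq).2, hT⟩) hnr
    · intro hle
      exact Or.inl (lexLt_succ_iff.2 (Or.inl (by omega)))
  · rw [if_neg hd]
    have hok : lexLt Su Sv ∨ (Su = Sv ∧
        ((a < b ∧ ¬ RNbr R a b) ∨ (b < a ∧ RNbr R b a))) := by
      by_contra hc; exact hd (hD.2 hc)
    constructor
    · rintro (hlex | ⟨heq, hT⟩)
      · rcases lexLt_succ_iff.1 hlex with h | ⟨h0, _⟩ <;> omega
      · have h0 : Z u 0 = Z v 0 := congrFun heq 0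
        omega
    · intro hle
      rcases Nat.lt_or_ge (Z u 0) (Z v 0) with h | h
      · exact Or.inl (lexLt_succ_iff.2 (Or.inl h))
      · have h0 : Z u 0 = Z v 0 := by omega
        rcases hok with hl | ⟨hse, hT⟩
        · exact Or.inl (lexLt_succ_iff.2 (Or.inr ⟨h0, hl⟩))
        · exact Or.inr ⟨seq_eq_succ_iff.2 ⟨h0, hse⟩, hT⟩

lemma isReading_iff (R : Finset ℕ) (σ : Equiv.Perm (Fin n)) (Z : Fin n → Seq (r+1)) :
    IsReading R Z σ ↔ ∀ j : ℕ, ∀ (_ : 1 ≤ j) (h2 : j < n) (hj1 : j - 1 < n),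
      Z (σ ⟨j-1, hj1⟩) 0 + (if desCond R (tailS Z) σ j then 1 else 0) ≤ Z (σ ⟨j, h2⟩) 0 := by
  unfold IsReading
  constructor
  · intro H j h1 h2 hj1
    exact (readBefore_iff R σ Z j h1 h2 hj1).1 (H j (Finset.mem_Icc.2 ⟨h1, by omega⟩))
  · intro H j hj
    rw [Finset.mem_Icc] at hj
    have h2 : j < n := by omega
    exact (readBefore_iff R σ Z j hj.1 h2 (by omega)).2 (H j hj.1 h2 (by omega))

end Core

section Assemble
variable {n r : ℕ}

lemma eFOF_symm_apply {α M : Type*} [Finite α] [Zero M] (f : α → M) (a : α) :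
    (Finsupp.equivFunOnFinite.symm f) a = f a := rfl

lemma exp_forward (R : Finset ℕ) (σ : Equiv.Perm (Fin n)) (S : Fin n → Seq r) (h : Fin n → ℕ) :
    expOf (fun v : Fin n =>
        (Fin.cons (mcnt R σ S (σ.symm v).val + h (σ.symm v)) (S v) : Seq (r+1))) =
      expTail S + Finsupp.single (Fin.last r) (Comaj R S σ + ∑ k, h k) := by
  ext i
  simp only [expOf, expTail, eFOF_symm_apply, Finsupp.add_apply]
  by_cases hi : i = Fin.last r
  · subst hi
    rw [Fin.rev_last]
    simp only [Fin.cons_zero]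
    rw [Finsupp.single_eq_same, dif_neg (by simp)]
    rw [Finset.sum_add_distrib,
      Equiv.sum_comp σ.symm (fun k : Fin n => mcnt R σ S k.val),
      Equiv.sum_comp σ.symm h, sum_mcnt]
    omega
  · have hi' : i.val < r := by
      have h1 : i.val < r + 1 := i.isLt
      have h2 : i.val ≠ r := fun hc => hi (Fin.ext (by simp [hc]))
      omega
    rw [Finsupp.single_apply, if_neg (fun hc : Fin.last r = i => hi hc.symm), dif_pos hi',
      add_zero]
    have hrev : Fin.rev i = (Fin.rev (⟨i.val, hi'⟩ : Fin r)).succ :=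
      Fin.ext (show r + 1 - (i.val + 1) = (r - (i.val + 1)) + 1 by omega)
    rw [hrev]
    exact Finset.sum_congr rfl (fun v _ => Fin.cons_succ _ _ _)

lemma exp_Zop (R : Finset ℕ) (σ : Equiv.Perm (Fin n)) (S : Fin n → Seq r) :
    expOf (Zop R σ S) = expTail S + Finsupp.single (Fin.last r) (Comaj R S σ) := by
  have h0 := exp_forward R σ S (fun _ => 0)
  simp only [add_zero, Finset.sum_const_zero] at h0
  exact h0

lemma finite_fiber1 (R : Finset ℕ) (σ : Equiv.Perm (Fin n)) (d : Fin (r+1) →₀ ℕ) :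
    Finite {S : Fin n → Seq r //
      expTail S + Finsupp.single (Fin.last r) (Comaj R S σ) = d} := by
  have hb : ∀ (x : {S : Fin n → Seq r //
      expTail S + Finsupp.single (Fin.last r) (Comaj R S σ) = d}) (j : Fin n) (c : Fin r),
      x.1 j c < d ⟨(Fin.rev c).val, Nat.lt_succ_of_lt (Fin.rev c).isLt⟩ + 1 := by
    intro x j c
    have hlt : (Fin.rev c).val < r := (Fin.rev c).isLt
    set i : Fin (r+1) := ⟨(Fin.rev c).val, Nat.lt_succ_of_lt (Fin.rev c).isLt⟩ with hidef
    have hx := congrArg (fun f : Fin (r+1) →₀ ℕ => f i) x.2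
    simp only [Finsupp.add_apply] at hx
    have hsingle : Finsupp.single (Fin.last r) (Comaj R x.1 σ) i = 0 := by
      apply Finsupp.single_eq_of_ne
      intro hc
      have := congrArg Fin.val hc
      simp only [Fin.val_last, hidef] at this
      omega
    have het : expTail x.1 i = ∑ t : Fin n, x.1 t c := by
      simp only [expTail, eFOF_symm_apply]
      rw [dif_pos (show i.val < r from hlt)]
      have he : (⟨i.val, hlt⟩ : Fin r) = Fin.rev c := Fin.ext rfl
      rw [he, Fin.rev_rev]
    have hone : x.1 j c ≤ ∑ t : Fin n, x.1 t c :=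
      Finset.single_le_sum (f := fun t : Fin n => x.1 t c)
        (fun _ _ => Nat.zero_le _) (Finset.mem_univ j)
    omega
  apply Finite.of_injective
    (fun x : {S : Fin n → Seq r //
        expTail S + Finsupp.single (Fin.last r) (Comaj R S σ) = d} =>
      (fun j c => (⟨x.1 j c, hb x j c⟩ :
        Fin (d ⟨(Fin.rev c).val, Nat.lt_succ_of_lt (Fin.rev c).isLt⟩ + 1)) :
        ∀ (_ : Fin n) (c : Fin r),
          Fin (d ⟨(Fin.rev c).val, Nat.lt_succ_of_lt (Fin.rev c).isLt⟩ + 1)))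
  intro x y hxy
  apply Subtype.ext; funext j c
  exact congrArg Fin.val (congrFun (congrFun hxy j) c)

lemma finite_fiber2 (R : Finset ℕ) (σ : Equiv.Perm (Fin n)) (d : Fin (r+1) →₀ ℕ) :
    Finite {Z : {Z : Fin n → Seq (r+1) // IsReading R Z σ} // expOf Z.1 = d} := by
  have hb : ∀ (x : {Z : {Z : Fin n → Seq (r+1) // IsReading R Z σ} // expOf Z.1 = d})
      (j : Fin n) (c : Fin (r+1)), x.1.1 j c < d (Fin.rev c) + 1 := by
    intro x j c
    have hx := congrArg (fun f : Fin (r+1) →₀ ℕ => f (Fin.rev c)) x.2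
    simp only [expOf, eFOF_symm_apply, Fin.rev_rev] at hx
    have hone : x.1.1 j c ≤ ∑ t : Fin n, x.1.1 t c :=
      Finset.single_le_sum (f := fun t : Fin n => x.1.1 t c)
        (fun _ _ => Nat.zero_le _) (Finset.mem_univ j)
    omega
  apply Finite.of_injective
    (fun x : {Z : {Z : Fin n → Seq (r+1) // IsReading R Z σ} // expOf Z.1 = d} =>
      (fun j c => (⟨x.1.1 j c, hb x j c⟩ : Fin (d (Fin.rev c) + 1)) :
        ∀ (_ : Fin n) (c : Fin (r+1)), Fin (d (Fin.rev c) + 1)))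
  intro x y hxy
  apply Subtype.ext; apply Subtype.ext; funext j c
  exact congrArg Fin.val (congrFun (congrFun hxy j) c)

lemma mono_of_step (f : Fin n → ℕ)
    (hf : ∀ t (ht : t + 1 < n), f ⟨t, by omega⟩ ≤ f ⟨t+1, ht⟩) : Monotone f := by
  have key : ∀ s t (hts : t + s < n), f ⟨t, by omega⟩ ≤ f ⟨t+s, hts⟩ := by
    intro s
    induction s with
    | zero => intro t ht; exact le_of_eq rfl
    | succ s ih =>
      intro t ht
      have h1 : t + s < n := by omega
      exact le_trans (ih t h1) (hf (t+s) (by omega))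
  intro a b hab
  have hab' : a.val ≤ b.val := hab
  have h1 : a.val + (b.val - a.val) < n := by omega
  have hk := key (b.val - a.val) a.val h1
  have he : (⟨a.val + (b.val - a.val), h1⟩ : Fin n) = b :=
    Fin.ext (show a.val + (b.val - a.val) = b.val by omega)
  have he2 : (⟨a.val, by omega⟩ : Fin n) = a := Fin.ext rfl
  rw [he, he2] at hk
  exact hk

lemma cons_ineq_helper (R : Finset ℕ) (σ : Equiv.Perm (Fin n)) (S : Fin n → Seq r)
    (h : Fin n → ℕ) (hmono : Monotone h) (t : ℕ) (pf1 : t < n) (pf2 : t + 1 < n) :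
    (mcnt R σ S t + h ⟨t, pf1⟩) + (if desCond R S σ (t+1) then 1 else 0) ≤
      mcnt R σ S (t+1) + h ⟨t+1, pf2⟩ := by
  have hm := mcnt_succ R σ S t
  have hmono' : h ⟨t, pf1⟩ ≤ h ⟨t+1, pf2⟩ := hmono (Fin.mk_le_mk.2 (by omega))
  by_cases hdc : desCond R S σ (t+1)
  · rw [if_pos hdc]
    rw [if_pos ((mem_DesSet R S σ (t+1)).2 ⟨⟨by omega, by omega⟩, hdc⟩)] at hm
    omega
  · rw [if_neg hdc]
    rw [if_neg (fun hc => hdc ((mem_DesSet R S σ (t+1)).1 hc).2)] at hm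
    omega

lemma g_ge (R : Finset ℕ) (σ : Equiv.Perm (Fin n)) (Z : Fin n → Seq (r+1))
    (hZ : IsReading R Z σ) : ∀ t (pf : t < n), mcnt R σ (tailS Z) t ≤ Z (σ ⟨t, pf⟩) 0 := by
  intro t
  induction t with
  | zero => intro pf; rw [mcnt_zero]; exact Nat.zero_le _
  | succ t ih =>
    intro pf
    have pf1 : t < n := by omega
    have h := (isReading_iff R σ Z).1 hZ (t+1) (by omega) pf (by omega)
    have h' : Z (σ ⟨t, pf1⟩) 0 + (if desCond R (tailS Z) σ (t+1) then 1 else 0) ≤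
        Z (σ ⟨t+1, pf⟩) 0 := h
    have hm := mcnt_succ R σ (tailS Z) t
    have hge := ih pf1
    by_cases hdc : desCond R (tailS Z) σ (t+1)
    · rw [if_pos hdc] at h'
      rw [if_pos ((mem_DesSet R (tailS Z) σ (t+1)).2 ⟨⟨by omega, by omega⟩, hdc⟩)] at hm
      omega
    · rw [if_neg hdc] at h'
      rw [if_neg (fun hc => hdc ((mem_DesSet R (tailS Z) σ (t+1)).1 hc).2)] at hm
      omega

lemma sub_step (R : Finset ℕ) (σ : Equiv.Perm (Fin n)) (Z : Fin n → Seq (r+1))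
    (hZ : IsReading R Z σ) (t : ℕ) (pf1 : t < n) (pf2 : t + 1 < n) :
    Z (σ ⟨t, pf1⟩) 0 - mcnt R σ (tailS Z) t ≤
      Z (σ ⟨t+1, pf2⟩) 0 - mcnt R σ (tailS Z) (t+1) := by
  have h := (isReading_iff R σ Z).1 hZ (t+1) (by omega) pf2 (by omega)
  have h' : Z (σ ⟨t, pf1⟩) 0 + (if desCond R (tailS Z) σ (t+1) then 1 else 0) ≤
      Z (σ ⟨t+1, pf2⟩) 0 := h
  have hm := mcnt_succ R σ (tailS Z) t
  have hge := g_ge R σ Z hZ t pf1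
  by_cases hdc : desCond R (tailS Z) σ (t+1)
  · rw [if_pos hdc] at h'
    rw [if_pos ((mem_DesSet R (tailS Z) σ (t+1)).2 ⟨⟨by omega, by omega⟩, hdc⟩)] at hm
    omega
  · rw [if_neg hdc] at h'
    rw [if_neg (fun hc => hdc ((mem_DesSet R (tailS Z) σ (t+1)).1 hc).2)] at hm
    omega

/-- the central bijection. -/
def E2 (R : Finset ℕ) (σ : Equiv.Perm (Fin n)) :
    ((Fin n → Seq r) × {h : Fin n → ℕ // Monotone h}) ≃
      {Z : Fin n → Seq (r+1) // IsReading R Z σ} where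
  toFun p := ⟨fun v => Fin.cons (mcnt R σ p.1 (σ.symm v).val + p.2.1 (σ.symm v)) (p.1 v), by
    refine (isReading_iff R σ _).2 (fun j h1 h2 hj1 => ?_)
    obtain ⟨t, rfl⟩ : ∃ t, j = t + 1 := ⟨j - 1, by omega⟩
    have htail : tailS (fun v =>
        (Fin.cons (mcnt R σ p.1 (σ.symm v).val + p.2.1 (σ.symm v)) (p.1 v) : Seq (r+1))) =
        p.1 := funext fun v => funext fun i => Fin.cons_succ _ _ _
    rw [htail]
    simp only [Equiv.symm_apply_apply, Fin.cons_zero]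
    exact cons_ineq_helper R σ p.1 p.2.1 p.2.2 t (by omega) h2⟩
  invFun Zp := (tailS Zp.1,
    ⟨fun k => Zp.1 (σ k) 0 - mcnt R σ (tailS Zp.1) k.val,
      mono_of_step _ (fun t ht => sub_step R σ Zp.1 Zp.2 t (by omega) ht)⟩)
  left_inv := by
    rintro ⟨S, h⟩
    have htail : tailS (fun v =>
        (Fin.cons (mcnt R σ S (σ.symm v).val + h.1 (σ.symm v)) (S v) : Seq (r+1))) = S :=
      funext fun v => funext fun i => Fin.cons_succ _ _ _
    refine Prod.ext htail ?_
    apply Subtype.ext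
    funext k
    show (fun v => (Fin.cons (mcnt R σ S (σ.symm v).val + h.1 (σ.symm v)) (S v) : Seq (r+1)))
        (σ k) 0 - mcnt R σ (tailS (fun v =>
          (Fin.cons (mcnt R σ S (σ.symm v).val + h.1 (σ.symm v)) (S v) : Seq (r+1)))) k.val
        = h.1 k
    rw [htail]
    simp only [Equiv.symm_apply_apply, Fin.cons_zero]
    omega
  right_inv := by
    rintro ⟨Z, hZ⟩
    apply Subtype.ext
    funext v
    show (Fin.cons (mcnt R σ (tailS Z) (σ.symm v).val +
        (Z (σ (σ.symm v)) 0 - mcnt R σ (tailS Z) (σ.symm v).val)) (tailS Z v) : Seq (r+1)) = Z v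
    funext i
    rcases Fin.eq_zero_or_eq_succ i with rfl | ⟨i', rfl⟩
    · rw [Fin.cons_zero]
      have hge : mcnt R σ (tailS Z) (σ.symm v).val ≤ Z (σ (σ.symm v)) 0 :=
        g_ge R σ Z hZ (σ.symm v).val (σ.symm v).isLt
      rw [Equiv.apply_symm_apply] at hge ⊢
      omega
    · rw [Fin.cons_succ]
      rfl

end Assemble

/-- **Corollary.**  In `r+1` variables, for any `R ⊆ {1, …, n−1}` and `σ ∈ S_n`:
`(q_{r+1};q_{r+1})_n ⬝ ∑_{Z ∈ (ℕ^{r+1})^n, σ_R(Z) = σ} q^Z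
  = ∑_{S ∈ (ℕ^r)^n} q_{r+1}^{Comaj_{R,S}(σ)} q^S = ∑_{S ∈ (ℕ^r)^n} q^{Z_{R,σ}(S)}`. -/
theorem general_corollary (n r : ℕ) (hn : 1 ≤ n)
    (R : Finset ℕ) (hR : R ⊆ Finset.Icc 1 (n-1)) (σ : Equiv.Perm (Fin n)) :
    (pochOne n (Fin.last r) *
        countSeries (fun Z : Fin n → Seq (r+1) => IsReading R Z σ) =
      countSeriesP (α := Fin n → Seq r)
        (fun S d => expTail S + Finsupp.single (Fin.last r) (Comaj R S σ) = d)) ∧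
    (countSeriesP (α := Fin n → Seq r)
        (fun S d => expTail S + Finsupp.single (Fin.last r) (Comaj R S σ) = d) =
      countSeriesP (α := Fin n → Seq r)
        (fun S d => expOf (Zop R σ S) = d)) := by
  constructor
  · have hcs : countSeries (fun Z : Fin n → Seq (r+1) => IsReading R Z σ) =
        WS (fun Z : {Z : Fin n → Seq (r+1) // IsReading R Z σ} => expOf Z.1) := by
      funext d
      exact congrArg (fun k : ℕ => (k : ℤ)) (Nat.card_congr
        { toFun := fun x => ⟨⟨x.1, x.2.1⟩, x.2.2⟩
          invFun := fun x => ⟨x.1.1, x.1.2, x.2⟩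
          left_inv := fun x => rfl
          right_inv := fun x => rfl })
    rw [hcs, countSeriesP_eq_WS]
    have hiso : WS (fun Z : {Z : Fin n → Seq (r+1) // IsReading R Z σ} => expOf Z.1) =
        WS (fun S : Fin n → Seq r =>
            expTail S + Finsupp.single (Fin.last r) (Comaj R S σ)) * Ppart r n := by
      rw [Ppart, WS_mul _ _ (finite_fiber1 R σ) (finite_Ppart_fiber r n)]
      refine (WS_congr _ _ (E2 R σ) ?_).symm
      intro p
      show expOf ((E2 R σ) p).1 = _
      rw [show ((E2 R σ) p).1 = (fun v => (Fin.cons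
          (mcnt R σ p.1 (σ.symm v).val + p.2.1 (σ.symm v)) (p.1 v) : Seq (r+1))) from rfl]
      rw [exp_forward R σ p.1 p.2.1, Finsupp.single_add]
      exact (add_assoc _ _ _).symm
    rw [hiso, mul_left_comm, poch_P r n, mul_one]
  · funext d
    refine congrArg (fun k : ℕ => (k : ℤ)) (Nat.card_congr (Equiv.subtypeEquivRight (fun S => ?_)))
    show (expTail S + Finsupp.single (Fin.last r) (Comaj R S σ) = d) ↔ (expOf (Zop R σ S) = d)
    rw [exp_Zop R σ S]

end

end RomeroComaj
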